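/- Let U : ℝ → ℝ^{n×r}, V : ℝ → ℝ^{m×r} be C¹ curves with nonnegative-entrywise dynamics given by the mirror gradient flow U̇ = −U ⊙ ∇_U E and V̇ = −V ⊙ ∇_V E, where E(U,V) = L(UVᵀ) for C¹ L : ℝ^{n×m} → ℝ, ⊙ denotes entrywise product, ∇_U E = ∇L(UVᵀ)·V and ∇_V E = [∇L(UVᵀ)]ᵀ·U. Then the row vector 1_nᵀ U − 1_mᵀ V ∈ ℝ^{1×r} is constant in time. -/

import Mathlib

open Matrix

/-- NMF conservation laws: for the mirror gradient flow `U̇ = -U ⊙ ∇_U E`,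
`V̇ = -V ⊙ ∇_V E` with `E (U, V) = L (U Vᵀ)`, `∇_U E = ∇L(UVᵀ) V`,
`∇_V E = ∇L(UVᵀ)ᵀ U` (`G` is the gradient of `L` w.r.t. the Frobenius inner product),
each entry of the row vector `1ₙᵀ U - 1ₘᵀ V` is constant in time. -/
theorem stmt7 {n m r : ℕ}
    (L : Matrix (Fin n) (Fin m) ℝ → ℝ)
    (G : Matrix (Fin n) (Fin m) ℝ → Matrix (Fin n) (Fin m) ℝ)
    (hG : ∀ M H : Matrix (Fin n) (Fin m) ℝ,
      HasDerivAt (fun s : ℝ => L (M + s • H)) (Matrix.trace ((G M)ᵀ * H)) 0)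
    (U U' : ℝ → Matrix (Fin n) (Fin r) ℝ)
    (V V' : ℝ → Matrix (Fin m) (Fin r) ℝ)
    (hU : ∀ i j t, HasDerivAt (fun t => U t i j) (U' t i j) t)
    (hV : ∀ i j t, HasDerivAt (fun t => V t i j) (V' t i j) t)
    (odeU : ∀ t i j, U' t i j = -(U t i j * (G (U t * (V t)ᵀ) * V t) i j))
    (odeV : ∀ t i j, V' t i j = -(V t i j * ((G (U t * (V t)ᵀ))ᵀ * U t) i j)) :
    ∀ (j : Fin r) (t s : ℝ),
      (∑ i, U t i j) - (∑ i, V t i j) = (∑ i, U s i j) - (∑ i, V s i j) := by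
  intro j t s
  set f : ℝ → ℝ := fun t => (∑ i, U t i j) - (∑ i, V t i j) with hf
  have key : ∀ τ : ℝ, HasDerivAt f 0 τ := by
    intro τ
    have h1 : HasDerivAt (fun t => ∑ i, U t i j) (∑ i, U' τ i j) τ :=
      HasDerivAt.fun_sum fun i _ => hU i j τ
    have h2 : HasDerivAt (fun t => ∑ i, V t i j) (∑ i, V' τ i j) τ :=
      HasDerivAt.fun_sum fun i _ => hV i j τ
    have h3 := h1.sub h2
    have hz : (∑ i, U' τ i j) - (∑ i, V' τ i j) = 0 := by
      simp only [odeU, odeV, Matrix.mul_apply, Matrix.transpose_apply]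
      rw [sub_eq_zero]
      simp only [Finset.sum_neg_distrib, neg_inj, Finset.mul_sum]
      rw [Finset.sum_comm]
      apply Finset.sum_congr rfl; intro k _
      apply Finset.sum_congr rfl; intro i _
      ring
    rwa [hz] at h3
  have : ∀ τ, deriv f τ = 0 := fun τ => (key τ).deriv
  have hc := is_const_of_deriv_eq_zero (fun τ => (key τ).differentiableAt) this
  exact hc t s
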